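/- If ψ(x + y) − ψ(x) = y + O(x^{1/2} log² x) uniformly for 0 < y ≤ x, then for every ε > 0 and all sufficiently large x, the interval (x, x + x^{1/2+ε}] contains a prime. -/

import Mathlib

open Filter ArithmeticFunction in
/-- The Chebyshev psi function `ψ(x) = ∑_{n ≤ x} Λ(n)`. -/
noncomputable def chebyshevPsi (x : ℝ) : ℝ :=
  ∑ n ∈ Finset.range (⌊x⌋₊ + 1), ArithmeticFunction.vonMangoldt n

/-- Structure of a prime power that is not prime: it is `minFac ^ e` with `e ≥ 2`. -/
lemma primePow_struct {n : ℕ} (h1 : IsPrimePow n) (h2 : ¬ n.Prime) :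
    Nat.Prime n.minFac ∧ 2 ≤ n.factorization n.minFac ∧
      n.minFac ^ n.factorization n.minFac = n := by
  obtain ⟨p, k, hp, hk, rfl⟩ := h1
  have hp' : p.Prime := Nat.prime_iff.mpr hp
  have hk2 : 2 ≤ k := by
    by_contra hlt
    have hk1 : k = 1 := by omega
    subst hk1
    rw [pow_one] at h2
    exact h2 hp'
  have hmin : (p ^ k).minFac = p := by
    have hne : p ^ k ≠ 1 := (Nat.one_lt_pow (by omega) hp'.one_lt).ne'
    have hmf := Nat.minFac_prime hne
    have hdvd : (p ^ k).minFac ∣ p := hmf.dvd_of_dvd_pow (Nat.minFac_dvd _)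
    exact (Nat.prime_dvd_prime_iff_eq hmf hp').mp hdvd
  have hfac : (p ^ k).factorization p = k := by
    rw [hp'.factorization_pow, Finsupp.single_eq_same]
  rw [hmin, hfac]
  exact ⟨hp', hk2, rfl⟩

/-- Counting non-prime prime powers in an interval. -/
lemma card_primepow_le (a b : ℕ) :
    ((Finset.Ioc a b).filter fun n => IsPrimePow n ∧ ¬ n.Prime).card
      ≤ (Nat.sqrt b + 1) * (Nat.log 2 b + 1) := by
  classical
  have key := Finset.card_le_card_of_injOn
    (s := (Finset.Ioc a b).filter fun n => IsPrimePow n ∧ ¬ n.Prime)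
    (t := Finset.range (Nat.sqrt b + 1) ×ˢ Finset.range (Nat.log 2 b + 1))
    (fun n : ℕ => (n.minFac, n.factorization n.minFac))
    ?_ ?_
  · simpa using key
  · intro n hn
    simp only [Finset.mem_coe, Finset.mem_filter, Finset.mem_Ioc] at hn
    obtain ⟨⟨han, hnb⟩, hpp, hnp⟩ := hn
    obtain ⟨hp, hk2, hpk⟩ := primePow_struct hpp hnp
    simp only [Finset.mem_coe, Finset.mem_product, Finset.mem_range, Nat.lt_succ_iff]
    constructor
    · refine Nat.le_sqrt.mpr ?_
      calc n.minFac * n.minFac = n.minFac ^ 2 := (sq n.minFac).symm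
        _ ≤ n.minFac ^ n.factorization n.minFac :=
            Nat.pow_le_pow_right hp.one_lt.le hk2
        _ = n := hpk
        _ ≤ b := hnb
    · have h2k : 2 ^ n.factorization n.minFac ≤ b := by
        calc 2 ^ n.factorization n.minFac ≤ n.minFac ^ n.factorization n.minFac :=
              Nat.pow_le_pow_left hp.two_le _
          _ = n := hpk
          _ ≤ b := hnb
      have hb : b ≠ 0 := by omega
      exact (Nat.le_log_iff_pow_le one_lt_two hb).mpr h2k
  · intro m hm n hn heq
    simp only [Finset.coe_filter, Set.mem_setOf_eq, Finset.mem_Ioc] at hm hn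
    obtain ⟨_, hm1, hm2⟩ := hm
    obtain ⟨_, hn1, hn2⟩ := hn
    obtain ⟨_, _, hm3⟩ := primePow_struct hm1 hm2
    obtain ⟨_, _, hn3⟩ := primePow_struct hn1 hn2
    have h1 : m.minFac = n.minFac := congrArg Prod.fst heq
    have h2 : m.factorization m.minFac = n.factorization n.minFac := congrArg Prod.snd heq
    rw [← hm3, ← hn3, h2, h1]

set_option maxHeartbeats 1000000 in
open Filter in
theorem psi_estimate_implies_primes_in_short_intervals
    (h : ∃ C : ℝ, ∃ x₀ : ℝ, ∀ x ≥ x₀, ∀ y : ℝ, 0 < y → y ≤ x →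
      |chebyshevPsi (x + y) - chebyshevPsi x - y| ≤ C * x ^ ((1 : ℝ)/2) * (Real.log x)^2) :
    ∀ ε : ℝ, 0 < ε → ∃ x₁ : ℝ, ∀ x ≥ x₁, ∃ p : ℕ, p.Prime ∧
      x < p ∧ (p : ℝ) ≤ x + x ^ ((1 : ℝ)/2 + ε) := by
  obtain ⟨C, x₀, hC⟩ := h
  intro ε hε
  set δ : ℝ := min ε (1/2) with hδdef
  have hδ : 0 < δ := lt_min hε (by norm_num)
  have hδε : δ ≤ ε := min_le_left _ _
  have hδ2 : δ ≤ 1/2 := min_le_right _ _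
  set K : ℝ := max C 0 + 31 with hKdef
  have hK : 0 < K := by positivity
  -- eventual inequality : K * (log x)^2 < x ^ δ
  have hlittle : Filter.Tendsto (fun x : ℝ => Real.log x ^ (2:ℝ) / x ^ δ) atTop (nhds 0) :=
    (isLittleO_log_rpow_rpow_atTop 2 hδ).tendsto_div_nhds_zero
  have hev : ∀ᶠ x : ℝ in atTop, K * (Real.log x)^2 < x ^ δ := by
    filter_upwards [hlittle.eventually_lt_const (show (0:ℝ) < 1/K by positivity),
      eventually_ge_atTop (1:ℝ)] with x hx hx1
    have hx0 : (0:ℝ) < x := lt_of_lt_of_le one_pos hx1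
    have hlog : (0:ℝ) ≤ Real.log x := Real.log_nonneg hx1
    have hrp : (0:ℝ) < x ^ δ := Real.rpow_pos_of_pos hx0 δ
    rw [show Real.log x ^ (2:ℝ) = Real.log x ^ (2:ℕ) by
      rw [← Real.rpow_natCast (Real.log x) 2]; norm_num, div_lt_iff₀ hrp] at hx
    calc K * (Real.log x)^2 < K * (1/K * x ^ δ) := mul_lt_mul_of_pos_left hx hK
      _ = x ^ δ := by field_simp
  obtain ⟨x₁, hx₁⟩ := Filter.eventually_atTop.mp (hev.and (eventually_ge_atTop (max x₀ 16)))
  refine ⟨x₁, fun x hx => ?_⟩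
  obtain ⟨hevx, hxmax⟩ := hx₁ x hx
  have hxx₀ : x ≥ x₀ := le_trans (le_max_left _ _) hxmax
  have hx16 : (16:ℝ) ≤ x := le_trans (le_max_right _ _) hxmax
  have hx0 : (0:ℝ) < x := by linarith
  have hx1 : (1:ℝ) ≤ x := by linarith
  -- log x ≥ 2
  have hL2 : (2:ℝ) ≤ Real.log x := by
    have h16 : Real.log 16 ≤ Real.log x := Real.log_le_log (by norm_num) hx16
    have : Real.log 16 = 4 * Real.log 2 := by
      rw [show (16:ℝ) = 2^4 by norm_num, Real.log_pow]; push_cast; ring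
    have hl2 := Real.log_two_gt_d9
    linarith
  have hLpos : (0:ℝ) < Real.log x := by linarith
  have hsx1 : (1:ℝ) ≤ Real.sqrt x := by
    rw [show (1:ℝ) = Real.sqrt 1 from Real.sqrt_one.symm]
    exact Real.sqrt_le_sqrt hx1
  have hsxpos : (0:ℝ) < Real.sqrt x := by linarith
  set y : ℝ := x ^ ((1:ℝ)/2 + δ) with hydef
  have hy0 : 0 < y := Real.rpow_pos_of_pos hx0 _
  have hyx : y ≤ x := by
    calc y ≤ x ^ (1:ℝ) := Real.rpow_le_rpow_of_exponent_le hx1 (by linarith)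
      _ = x := Real.rpow_one x
  have hyε : y ≤ x ^ ((1:ℝ)/2 + ε) :=
    Real.rpow_le_rpow_of_exponent_le hx1 (by linarith)
  have hxy0 : (0:ℝ) < x + y := by linarith
  by_contra hno
  push_neg at hno
  -- ψ(x+y) - ψ(x) as a sum over Ioc
  set a : ℕ := ⌊x⌋₊ with hadef
  set b : ℕ := ⌊x + y⌋₊ with hbdef
  have hab : a ≤ b := Nat.floor_le_floor (by linarith)
  have ha16 : 16 ≤ a := by
    have := Nat.le_floor (show ((16:ℕ):ℝ) ≤ x by push_cast; linarith)
    simpa using this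
  have hbR : (b:ℝ) ≤ x + y := Nat.floor_le (by linarith)
  have hsum : chebyshevPsi (x + y) - chebyshevPsi x
      = ∑ n ∈ Finset.Ioc a b, ArithmeticFunction.vonMangoldt n := by
    unfold chebyshevPsi
    have hun : Finset.range (a+1) ∪ Finset.Ioc a b = Finset.range (b+1) := by
      ext n
      simp only [Finset.mem_union, Finset.mem_range, Finset.mem_Ioc, Nat.lt_succ_iff]
      omega
    have hdisj : Disjoint (Finset.range (a+1)) (Finset.Ioc a b) := by
      simp only [Finset.disjoint_left, Finset.mem_range, Finset.mem_Ioc, Nat.lt_succ_iff]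
      omega
    have hsum2 := Finset.sum_union (f := fun n => ArithmeticFunction.vonMangoldt n) hdisj
    rw [hun] at hsum2
    rw [show ⌊x + y⌋₊ = b from rfl, show ⌊x⌋₊ = a from rfl, hsum2]
    ring
  -- no prime in the interval, so only nonprime prime powers contribute
  set S : Finset ℕ := (Finset.Ioc a b).filter fun n => IsPrimePow n ∧ ¬ n.Prime with hSdef
  have hsub : (Finset.Ioc a b).filter
      (fun n => ArithmeticFunction.vonMangoldt n ≠ 0) ⊆ S := by
    intro n hn
    simp only [Finset.mem_filter, Finset.mem_Ioc] at hn
    obtain ⟨⟨han, hnb⟩, hΛ⟩ := hn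
    have hpp : IsPrimePow n := ArithmeticFunction.vonMangoldt_ne_zero_iff.mp hΛ
    have hnp : ¬ n.Prime := by
      intro hp
      have hgt : x < (n:ℝ) := by
        have h1 : x < (a:ℝ) + 1 := Nat.lt_floor_add_one x
        have h2 : ((a:ℝ) + 1) ≤ (n:ℝ) := by exact_mod_cast Nat.succ_le_of_lt han
        linarith
      have hle : (n:ℝ) ≤ x + x ^ ((1:ℝ)/2 + ε) := by
        have : (n:ℝ) ≤ (b:ℝ) := by exact_mod_cast hnb
        linarith
      linarith [hno n hp hgt]
    simp only [hSdef, Finset.mem_filter, Finset.mem_Ioc]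
    exact ⟨⟨han, hnb⟩, hpp, hnp⟩
  have hup1 : chebyshevPsi (x + y) - chebyshevPsi x
      ≤ ∑ n ∈ S, ArithmeticFunction.vonMangoldt n := by
    rw [hsum, ← Finset.sum_filter_ne_zero (Finset.Ioc a b)]
    exact Finset.sum_le_sum_of_subset_of_nonneg hsub
      (fun n _ _ => ArithmeticFunction.vonMangoldt_nonneg)
  -- each term is at most log (x + y)
  have hterm : ∀ n ∈ S, ArithmeticFunction.vonMangoldt n ≤ Real.log (x + y) := by
    intro n hn
    simp only [hSdef, Finset.mem_filter, Finset.mem_Ioc] at hn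
    have hn1 : 1 ≤ n := by omega
    have : ArithmeticFunction.vonMangoldt n ≤ Real.log n :=
      ArithmeticFunction.vonMangoldt_le_log
    refine le_trans this (Real.log_le_log (by exact_mod_cast hn1) ?_)
    have : (n:ℝ) ≤ (b:ℝ) := by exact_mod_cast hn.1.2
    linarith
  have hup2 : ∑ n ∈ S, ArithmeticFunction.vonMangoldt n
      ≤ (S.card : ℝ) * Real.log (x + y) := by
    calc ∑ n ∈ S, ArithmeticFunction.vonMangoldt n
        ≤ ∑ _n ∈ S, Real.log (x + y) := Finset.sum_le_sum hterm
      _ = (S.card : ℝ) * Real.log (x + y) := by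
          rw [Finset.sum_const, nsmul_eq_mul]
  -- real bounds on the card
  have hcard : (S.card : ℝ) ≤ ((Nat.sqrt b : ℝ) + 1) * ((Nat.log 2 b : ℝ) + 1) := by
    have := card_primepow_le a b
    have h2 : (S.card : ℝ) ≤ (((Nat.sqrt b + 1) * (Nat.log 2 b + 1) : ℕ) : ℝ) := by
      exact_mod_cast this
    push_cast at h2
    linarith
  have hxy2 : x + y ≤ 2 * x := by linarith
  have hlogxy : Real.log (x + y) ≤ (3/2) * Real.log x := by
    have h1 : Real.log (x + y) ≤ Real.log (2 * x) := Real.log_le_log hxy0 hxy2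
    have h2 : Real.log (2 * x) = Real.log 2 + Real.log x :=
      Real.log_mul (by norm_num) (ne_of_gt hx0)
    have h3 : Real.log 2 < 1 := by
      have := Real.log_two_lt_d9; linarith
    linarith
  have hlogxy0 : 0 ≤ Real.log (x + y) := Real.log_nonneg (by linarith)
  have hsqrtb : (Nat.sqrt b : ℝ) ≤ (3/2) * Real.sqrt x := by
    have h1 : ((Nat.sqrt b : ℝ))^2 ≤ (b:ℝ) := by exact_mod_cast Nat.sqrt_le' b
    have h2 : (Nat.sqrt b : ℝ) ≤ Real.sqrt (2 * x) := by
      rw [show ((Nat.sqrt b : ℝ)) = Real.sqrt (((Nat.sqrt b : ℝ))^2) from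
        (Real.sqrt_sq (by positivity)).symm]
      exact Real.sqrt_le_sqrt (by linarith)
    have h3 : Real.sqrt (2 * x) = Real.sqrt 2 * Real.sqrt x := Real.sqrt_mul (by norm_num) x
    have h4 : Real.sqrt 2 ≤ 3/2 := by
      rw [show (3/2:ℝ) = Real.sqrt ((3/2)^2) from (Real.sqrt_sq (by norm_num)).symm]
      exact Real.sqrt_le_sqrt (by norm_num)
    calc (Nat.sqrt b : ℝ) ≤ Real.sqrt 2 * Real.sqrt x := by rw [← h3]; exact h2
      _ ≤ (3/2) * Real.sqrt x := by nlinarith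
  have hlogb : (Nat.log 2 b : ℝ) ≤ 3 * Real.log x := by
    have h1 : (Nat.log 2 b : ℝ) ≤ Real.logb 2 b := Real.natLog_le_logb b 2
    have hb1 : (1:ℝ) ≤ (b:ℝ) := by
      have : 1 ≤ b := by omega
      exact_mod_cast this
    have h2 : Real.log b ≤ Real.log (x + y) := Real.log_le_log (by linarith) hbR
    have h3 : Real.logb 2 b = Real.log b / Real.log 2 := rfl
    have h4 : (1/2 : ℝ) < Real.log 2 := by
      have := Real.log_two_gt_d9; linarith
    have h5 : 0 ≤ Real.log b := Real.log_nonneg hb1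
    have h6 : Real.log b / Real.log 2 ≤ 2 * Real.log b := by
      rw [div_le_iff₀ (by linarith)]; nlinarith
    calc (Nat.log 2 b : ℝ) ≤ Real.log b / Real.log 2 := by rw [← h3]; exact h1
      _ ≤ 2 * Real.log b := h6
      _ ≤ 2 * ((3/2) * Real.log x) := by
          have : Real.log b ≤ (3/2) * Real.log x := le_trans h2 hlogxy
          linarith
      _ = 3 * Real.log x := by ring
  -- final combination
  have hlow := hC x hxx₀ y hy0 hyx
  have hlow' : y - C * x ^ ((1:ℝ)/2) * (Real.log x)^2
      ≤ chebyshevPsi (x + y) - chebyshevPsi x := by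
    have := abs_le.mp hlow
    linarith [this.1]
  have hfinal : chebyshevPsi (x + y) - chebyshevPsi x
      ≤ 14 * Real.sqrt x * (Real.log x)^2 := by
    have hc2 : (S.card : ℝ) * Real.log (x + y)
        ≤ (((3/2) * Real.sqrt x + 1) * (3 * Real.log x + 1)) * ((3/2) * Real.log x) := by
      have hcard' : (S.card : ℝ) ≤ ((3/2) * Real.sqrt x + 1) * (3 * Real.log x + 1) := by
        refine le_trans hcard ?_
        have h0 : (0:ℝ) ≤ (Nat.log 2 b : ℝ) := by positivity
        nlinarith [hsqrtb, hlogb]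
      have hcpos : (0:ℝ) ≤ (S.card : ℝ) := by positivity
      have hbig : (0:ℝ) ≤ ((3/2) * Real.sqrt x + 1) * (3 * Real.log x + 1) := by positivity
      calc (S.card : ℝ) * Real.log (x + y)
          ≤ ((3/2) * Real.sqrt x + 1) * (3 * Real.log x + 1) * Real.log (x + y) := by
            exact mul_le_mul_of_nonneg_right hcard' hlogxy0
        _ ≤ ((3/2) * Real.sqrt x + 1) * (3 * Real.log x + 1) * ((3/2) * Real.log x) := by
            exact mul_le_mul_of_nonneg_left hlogxy hbig
    refine le_trans (le_trans hup1 hup2) (le_trans hc2 ?_)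
    nlinarith [mul_nonneg (sub_nonneg.mpr hsx1) (sq_nonneg (Real.log x)),
      mul_nonneg (mul_nonneg hsxpos.le (by linarith : (0:ℝ) ≤ Real.log x - 2)) hLpos.le,
      mul_nonneg (by linarith : (0:ℝ) ≤ Real.log x - 2) hLpos.le,
      hsx1, hL2, hsxpos, hLpos]
  -- contradiction with the eventual inequality
  have hsqeq : x ^ ((1:ℝ)/2) = Real.sqrt x := (Real.sqrt_eq_rpow x).symm
  rw [hsqeq] at hlow'
  have hA : y ≤ C * Real.sqrt x * (Real.log x)^2 + 14 * Real.sqrt x * (Real.log x)^2 := by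
    linarith [hfinal]
  have hyeq : y = Real.sqrt x * x ^ δ := by
    rw [hydef, Real.rpow_add hx0, ← Real.sqrt_eq_rpow]
  rw [hyeq] at hA
  rw [hKdef] at hevx
  have hmul : Real.sqrt x * ((max C 0 + 31) * (Real.log x)^2) < Real.sqrt x * x ^ δ :=
    mul_lt_mul_of_pos_left hevx hsxpos
  have hCK : C ≤ max C 0 := le_max_left C 0
  have hsq2 : (0:ℝ) ≤ Real.sqrt x * (Real.log x)^2 := by positivity
  have hCK2 : C * (Real.sqrt x * (Real.log x)^2) ≤ max C 0 * (Real.sqrt x * (Real.log x)^2) :=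
    mul_le_mul_of_nonneg_right hCK hsq2
  nlinarith [hmul, hA, hCK2, hsq2, hsxpos, hLpos]
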